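/- Let (V,q) be a nondegenerate quadratic space over a field F of characteristic 2 and τ an involution in O(V,q) with R(τ) = K(τ). Then the quadratic form φ on R(τ) defined by φ(v) = ω_τ(v,v) is totally singular (its polar form vanishes identically) and equals -q restricted to R(τ), i.e., φ(v) = q(v) for all v ∈ R(τ). -/
import Mathlib


theorem wall_stmt18 {F V : Type*} [Field F] [CharP F 2] [AddCommGroup V] [Module F V]
    [FiniteDimensional F V] (q : QuadraticForm F V)
    (hq : LinearMap.BilinForm.Nondegenerate (QuadraticMap.polarBilin q))
    (τ : V →ₗ[F] V) (hτ : ∀ x, q (τ x) = q x)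
    (hinv : τ ∘ₗ τ = LinearMap.id)
    (hRK : LinearMap.range (τ - LinearMap.id) = LinearMap.ker (τ - LinearMap.id)) :
    (∀ x : V, QuadraticMap.polarBilin q (τ x - x) x = q (τ x - x)) ∧
    (∀ x y : V, QuadraticMap.polarBilin q (τ (x + y) - (x + y)) (x + y) =
      QuadraticMap.polarBilin q (τ x - x) x + QuadraticMap.polarBilin q (τ y - y) y) := by
  have hpol : ∀ u v : V, QuadraticMap.polarBilin q u v = q (u + v) - q u - q v := by
    intro u v
    simp [QuadraticMap.polarBilin_apply_apply, QuadraticMap.polar]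
  have hfix : ∀ x : V, τ (τ x - x) = τ x - x := by
    intro x
    have h1 : τ x - x ∈ LinearMap.ker (τ - LinearMap.id) := by
      rw [← hRK]
      exact ⟨x, by simp⟩
    have h2 := LinearMap.mem_ker.mp h1
    simp only [LinearMap.sub_apply, LinearMap.id_apply, sub_eq_zero] at h2
    exact h2
  have hBt : ∀ u v : V, QuadraticMap.polarBilin q (τ u) (τ v) = QuadraticMap.polarBilin q u v := by
    intro u v
    rw [hpol, hpol, ← map_add, hτ, hτ, hτ]
  have hfirst : ∀ x : V, QuadraticMap.polarBilin q (τ x - x) x = q (τ x - x) := by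
    intro x
    rw [hpol, sub_add_cancel, hτ]
    rw [show q x - q (τ x - x) - q x = -(q (τ x - x)) by ring, CharTwo.neg_eq]
  have hkey : ∀ x y : V, QuadraticMap.polarBilin q (τ x - x) (τ y - y) = 0 := by
    intro x y
    have h1 : QuadraticMap.polarBilin q (τ x) (τ y - y) = QuadraticMap.polarBilin q x (τ y - y) := by
      conv_lhs => rw [← hfix y]
      exact hBt x (τ y - y)
    have h2 : QuadraticMap.polarBilin q (τ x - x) (τ y - y)
        = QuadraticMap.polarBilin q (τ x) (τ y - y) - QuadraticMap.polarBilin q x (τ y - y) := by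
      simp [map_sub, LinearMap.sub_apply]; ring
    rw [h2, h1, sub_self]
  refine ⟨hfirst, fun x y => ?_⟩
  have hsplit : τ (x + y) - (x + y) = (τ x - x) + (τ y - y) := by
    rw [map_add]; abel
  rw [hfirst, hsplit]
  have hq0 := hkey x y
  rw [hpol] at hq0
  have : q ((τ x - x) + (τ y - y)) = q (τ x - x) + q (τ y - y) := by linear_combination hq0
  rw [this, hfirst x, hfirst y]
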